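/- Let n ≥ k ≥ 4 be integers, let G be a graph on n vertices and let v be a vertex of G of degree d_v. Then the number of induced k-cycles of G containing v satisfies D_k(G,v) ≤ (1/2) · d_v^2 · ((n − d_v − 1)/(k−3))^{k−3}. -/

import Mathlib

set_option maxHeartbeats 1000000

open Finset

/-- `D_k(G,v)`: the number of vertex subsets `S` of `G` containing `v` such that the induced
subgraph `G[S]` is isomorphic to the `k`-cycle `C_k`. -/
noncomputable def inducedCycleCountAt {V : Type*} [Fintype V] (G : SimpleGraph V) (k : ℕ)
    (v : V) : ℕ :=
  Set.ncard {S : Finset V | v ∈ S ∧ Nonempty (G.induce (S : Set V) ≃g SimpleGraph.cycleGraph k)}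

lemma amgm_aux (ℓ : ℕ) (x y : ℝ) (hx : 0 ≤ x) (hy : 0 ≤ y) :
    ((ℓ : ℝ) + 1) ^ (ℓ + 1) * (x * y ^ ℓ) ≤ (x + ℓ * y) ^ (ℓ + 1) := by
  have hl1 : (0:ℝ) < (ℓ:ℝ) + 1 := by positivity
  have hw : (1 / ((ℓ:ℝ)+1)) + ((ℓ:ℝ) / ((ℓ:ℝ)+1)) = 1 := by field_simp; ring
  have h := Real.geom_mean_le_arith_mean2_weighted
    (w₁ := 1 / ((ℓ:ℝ)+1)) (w₂ := (ℓ:ℝ) / ((ℓ:ℝ)+1))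
    (p₁ := ((ℓ:ℝ)+1) * x) (p₂ := ((ℓ:ℝ)+1) * y)
    (by positivity) (by positivity) (by positivity) (by positivity) hw
  have hrhs : (1 / ((ℓ:ℝ)+1)) * (((ℓ:ℝ)+1) * x) + ((ℓ:ℝ) / ((ℓ:ℝ)+1)) * (((ℓ:ℝ)+1) * y)
      = x + ℓ * y := by field_simp
  rw [hrhs] at h
  have hL : 0 ≤ ((((ℓ:ℝ)+1) * x) ^ (1 / ((ℓ:ℝ)+1))) * ((((ℓ:ℝ)+1) * y) ^ ((ℓ:ℝ) / ((ℓ:ℝ)+1))) := by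
    positivity
  have h2 := pow_le_pow_left₀ hL h (ℓ + 1)
  calc ((ℓ : ℝ) + 1) ^ (ℓ + 1) * (x * y ^ ℓ)
      = ((((ℓ:ℝ)+1) * x) ^ (1 / ((ℓ:ℝ)+1)) * ((((ℓ:ℝ)+1) * y) ^ ((ℓ:ℝ) / ((ℓ:ℝ)+1)))) ^ (ℓ + 1) := by
        rw [mul_pow, ← Real.rpow_natCast ((((ℓ:ℝ)+1) * x) ^ (1 / ((ℓ:ℝ)+1))),
          ← Real.rpow_natCast ((((ℓ:ℝ)+1) * y) ^ ((ℓ:ℝ) / ((ℓ:ℝ)+1))),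
          ← Real.rpow_mul (by positivity), ← Real.rpow_mul (by positivity)]
        have e1 : (1 / ((ℓ:ℝ)+1)) * ((ℓ + 1 : ℕ) : ℝ) = 1 := by push_cast; field_simp
        have e2 : ((ℓ:ℝ) / ((ℓ:ℝ)+1)) * ((ℓ + 1 : ℕ) : ℝ) = (ℓ:ℝ) := by push_cast; field_simp
        rw [e1, e2, Real.rpow_one, Real.rpow_natCast, mul_pow ((ℓ:ℝ)+1) y]
        ring
    _ ≤ (x + ℓ * y) ^ (ℓ + 1) := h2

variable {V : Type*} [Fintype V] [DecidableEq V]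

/-- tuples of `ℓ` vertices in `M` forming an induced path whose first vertex is the unique
neighbor of `a` among them. -/
def pathFinset (G : SimpleGraph V) [DecidableRel G.Adj] (a : V) (M : Finset V) (ℓ : ℕ) :
    Finset (Fin ℓ → V) :=
  Finset.univ.filter (fun p =>
    (∀ i, p i ∈ M) ∧ (∀ i : Fin ℓ, (i : ℕ) = 0 → G.Adj a (p i)) ∧
    (∀ i : Fin ℓ, (i : ℕ) ≠ 0 → ¬ G.Adj a (p i)) ∧
    (∀ i j : Fin ℓ, (j : ℕ) = (i : ℕ) + 1 → G.Adj (p i) (p j)) ∧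
    (∀ i j : Fin ℓ, (i : ℕ) + 2 ≤ (j : ℕ) → ¬ G.Adj (p i) (p j)))

theorem pathFinset_card_le (G : SimpleGraph V) [DecidableRel G.Adj] (ℓ : ℕ) (a : V)
    (M : Finset V) :
    ((pathFinset G a M ℓ).card : ℝ) ≤ ((M.card : ℝ) / ℓ) ^ ℓ := by
  induction ℓ generalizing a M with
  | zero =>
    have : (pathFinset G a M 0).card ≤ 1 := (Finset.card_le_univ _).trans (by simp)
    simp only [pow_zero]; exact_mod_cast this
  | succ ℓ IH =>
    set A := M.filter (fun x => G.Adj a x) with hA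
    set M' := M.filter (fun x => ¬ G.Adj a x) with hM'
    set B := A.biUnion (fun x => (pathFinset G x M' ℓ).image
      (fun q : Fin ℓ → V => (Fin.cons x q : Fin (ℓ+1) → V))) with hB
    have hsub : pathFinset G a M (ℓ+1) ⊆ B := by
      rw [hB]
      intro p hp
      rw [pathFinset, Finset.mem_filter] at hp
      obtain ⟨-, h1, h2, h3, h4, h5⟩ := hp
      rw [Finset.mem_biUnion]
      refine ⟨p 0, ?_, ?_⟩
      · rw [hA, Finset.mem_filter]
        exact ⟨h1 0, h2 0 rfl⟩
      · rw [Finset.mem_image]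
        refine ⟨Fin.tail p, ?_, Fin.cons_self_tail p⟩
        rw [pathFinset, Finset.mem_filter]
        refine ⟨Finset.mem_univ _, fun i => ?_, fun i hi => ?_, fun i hi => ?_,
          fun i j hj => ?_, fun i j hij => ?_⟩
        · rw [hM', Finset.mem_filter]
          exact ⟨h1 i.succ, h3 i.succ (by simp)⟩
        · have : (i.succ : ℕ) = ((0 : Fin (ℓ+1)) : ℕ) + 1 := by simp [hi]
          exact h4 0 i.succ this
        · exact h5 0 i.succ (by simp; omega)
        · exact h4 i.succ j.succ (by simp [hj])
        · exact h5 i.succ j.succ (by simp; omega)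
    have hcard1 : (pathFinset G a M (ℓ+1)).card ≤
        ∑ x ∈ A, (pathFinset G x M' ℓ).card := by
      refine (Finset.card_le_card hsub).trans ?_
      rw [hB]
      refine Finset.card_biUnion_le.trans ?_
      exact Finset.sum_le_sum (fun x _ => Finset.card_image_le)
    have hcard2 : ((pathFinset G a M (ℓ+1)).card : ℝ) ≤
        (A.card : ℝ) * (((M'.card : ℝ)) / ℓ) ^ ℓ := by
      calc ((pathFinset G a M (ℓ+1)).card : ℝ)
          ≤ (∑ x ∈ A, (pathFinset G x M' ℓ).card : ℕ) := by exact_mod_cast hcard1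
        _ = ∑ x ∈ A, ((pathFinset G x M' ℓ).card : ℝ) := by push_cast; rfl
        _ ≤ ∑ x ∈ A, (((M'.card : ℝ)) / ℓ) ^ ℓ := Finset.sum_le_sum (fun x _ => IH x M')
        _ = (A.card : ℝ) * (((M'.card : ℝ)) / ℓ) ^ ℓ := by
            rw [Finset.sum_const, nsmul_eq_mul]
    have hpart : A.card + M'.card = M.card := Finset.card_filter_add_card_filter_not _
    refine hcard2.trans ?_
    rcases Nat.eq_zero_or_pos ℓ with rfl | hℓ
    · simp only [pow_zero, mul_one, zero_add, pow_one, Nat.cast_one, div_one]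
      have : (A.card : ℝ) ≤ (M.card : ℝ) := by
        exact_mod_cast Finset.card_le_card (Finset.filter_subset _ M)
      simpa using this
    · have hl0 : (ℓ:ℝ) ≠ 0 := by positivity
      have key := amgm_aux ℓ (A.card : ℝ) ((M'.card : ℝ)/ℓ) (by positivity) (by positivity)
      have hmul : (ℓ:ℝ) * ((M'.card : ℝ)/ℓ) = (M'.card : ℝ) := by field_simp
      rw [hmul] at key
      have hsum : (A.card : ℝ) + (M'.card : ℝ) = (M.card : ℝ) := by exact_mod_cast hpart
      rw [hsum] at key
      push_cast
      rw [div_pow ((M.card:ℝ)) ((ℓ:ℝ)+1), le_div_iff₀ (by positivity)]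
      linarith [key]

lemma mod_helper (m x : ℕ) (hx : x < 2*m) :
    x % m = if x < m then x else x - m := by
  split
  · exact Nat.mod_eq_of_lt ‹_›
  · rw [Nat.mod_eq_sub_mod (by omega)]; exact Nat.mod_eq_of_lt (by omega)

lemma cyc_adj_iff (m p q : ℕ) (hp : p < m+4) (hq : q < m+4) :
    (SimpleGraph.cycleGraph (m+4)).Adj ⟨p,hp⟩ ⟨q,hq⟩ ↔
      (q = p+1 ∨ p = q+1 ∨ (p = 0 ∧ q = m+3) ∨ (q = 0 ∧ p = m+3)) := by
  rw [SimpleGraph.cycleGraph_adj]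
  simp only [Fin.ext_iff, Fin.sub_def, Fin.val_one]
  rw [mod_helper _ _ (by omega), mod_helper _ _ (by omega)]
  split <;> split <;> omega

lemma cyc_shift_adj (m : ℕ) (t i j : Fin (m+4)) :
    (SimpleGraph.cycleGraph (m+4)).Adj (t+i) (t+j) ↔ (SimpleGraph.cycleGraph (m+4)).Adj i j := by
  rw [SimpleGraph.cycleGraph_adj, SimpleGraph.cycleGraph_adj, add_sub_add_left_eq_sub,
    add_sub_add_left_eq_sub]

lemma cyc_shift_adj' (m : ℕ) (t i j : Fin (m+4)) :
    (SimpleGraph.cycleGraph (m+4)).Adj (t-i) (t-j) ↔ (SimpleGraph.cycleGraph (m+4)).Adj i j := by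
  rw [SimpleGraph.cycleGraph_adj, SimpleGraph.cycleGraph_adj, sub_sub_sub_cancel_left,
    sub_sub_sub_cancel_left, or_comm]

lemma fin_shift_ne (m : ℕ) (t : Fin (m+4)) : t + 1 ≠ t - 1 := by
  intro h
  have h2 := congrArg Fin.val h
  rw [Fin.add_def, Fin.sub_def] at h2
  simp only [Fin.val_one] at h2
  rw [mod_helper _ _ (by omega), mod_helper _ _ (by omega)] at h2
  have := t.isLt
  split at h2 <;> split at h2 <;> omega

/-- decoding function reconstructing a cycle listing from `(a, b, internal path)`. -/
def decodeFn (n k' : ℕ) (v a b : Fin n) (t : Fin (k'+1) → Fin n) : Fin (k'+4) → Fin n :=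
  fun j => if j.val = 0 then v else if j.val = 1 then a else
    if h : j.val ≤ k'+2 then t ⟨j.val - 2, by omega⟩ else b

theorem cycleCountAt_le_degree (n k : ℕ) (hk : 4 ≤ k) (hkn : k ≤ n)
    (G : SimpleGraph (Fin n)) [DecidableRel G.Adj] (v : Fin n) :
    (inducedCycleCountAt G k v : ℝ) ≤
      1 / 2 * (G.degree v : ℝ) ^ 2 *
        (((n : ℝ) - (G.degree v : ℝ) - 1) / ((k : ℝ) - 3)) ^ (k - 3) := by
  classical
  obtain ⟨k', rfl⟩ : ∃ k', k = k' + 4 := ⟨k - 4, by omega⟩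
  set d := G.degree v with hd
  set Nv := G.neighborFinset v with hNv
  set M : Finset (Fin n) := Finset.univ.filter (fun x => ¬ G.Adj v x ∧ x ≠ v) with hM
  set ℓ := k' + 1 with hℓ
  set 𝒮 : Finset (Finset (Fin n)) := Finset.univ.filter
    (fun S => v ∈ S ∧ Nonempty (G.induce (S : Set (Fin n)) ≃g SimpleGraph.cycleGraph (k'+4)))
    with h𝒮
  set E : Finset (Fin (k'+4) → Fin n) := Finset.univ.filter
    (fun c => c 0 = v ∧ Function.Injective c ∧
      ∀ i j, G.Adj (c i) (c j) ↔ (SimpleGraph.cycleGraph (k'+4)).Adj i j) with hE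
  -- the count is the cardinality of `𝒮`
  have hD : inducedCycleCountAt G (k'+4) v = 𝒮.card := by
    rw [inducedCycleCountAt]
    have hset : {S : Finset (Fin n) | v ∈ S ∧
        Nonempty (G.induce (S : Set (Fin n)) ≃g SimpleGraph.cycleGraph (k'+4))} = ↑𝒮 := by
      ext S
      simp [h𝒮]
    rw [hset, Set.ncard_coe_finset]
  -- every `c ∈ E` has image in `𝒮`
  have himg : ∀ c ∈ E, Finset.image c Finset.univ ∈ 𝒮 := by
    intro c hc
    rw [hE, Finset.mem_filter] at hc
    obtain ⟨-, hc0, hinj, hadj⟩ := hc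
    rw [h𝒮, Finset.mem_filter]
    refine ⟨Finset.mem_univ _, ?_, ?_⟩
    · rw [Finset.mem_image]
      exact ⟨0, Finset.mem_univ _, hc0⟩
    · have hmem : ∀ i, c i ∈ ((Finset.image c Finset.univ : Finset (Fin n)) : Set (Fin n)) := by
        intro i
        rw [Finset.mem_coe, Finset.mem_image]
        exact ⟨i, Finset.mem_univ _, rfl⟩
      have hbij : Function.Bijective
          (fun i => (⟨c i, hmem i⟩ :
            ((Finset.image c Finset.univ : Finset (Fin n)) : Set (Fin n)))) := by
        constructor
        · intro x y hxy
          exact hinj (congrArg Subtype.val hxy)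
        · rintro ⟨x, hx⟩
          rw [Finset.mem_coe, Finset.mem_image] at hx
          obtain ⟨i, -, hi⟩ := hx
          exact ⟨i, Subtype.ext hi⟩
      refine ⟨RelIso.symm ⟨Equiv.ofBijective _ hbij, @fun i j => ?_⟩⟩
      show (G.induce _).Adj ⟨c i, hmem i⟩ ⟨c j, hmem j⟩ ↔ _
      simp only [SimpleGraph.comap_adj, Function.Embedding.coe_subtype]
      exact hadj i j
  -- every `S ∈ 𝒮` has at least two listings in `E`
  have hfib : ∀ S ∈ 𝒮, 2 ≤ (E.filter (fun c => Finset.image c Finset.univ = S)).card := by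
    intro S hS
    rw [h𝒮, Finset.mem_filter] at hS
    obtain ⟨-, hvS, ⟨φ⟩⟩ := hS
    have hvS' : v ∈ (S : Set (Fin n)) := Finset.mem_coe.mpr hvS
    set i₀ := φ ⟨v, hvS'⟩ with hi₀
    have key : ∀ c₀ : Fin (k'+4) → Fin (k'+4), Function.Injective c₀ →
        (∀ i j, (SimpleGraph.cycleGraph (k'+4)).Adj (c₀ i) (c₀ j) ↔
          (SimpleGraph.cycleGraph (k'+4)).Adj i j) → c₀ 0 = i₀ →
        (fun j => (φ.symm (c₀ j) : Fin n)) ∈ E ∧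
          Finset.image (fun j => (φ.symm (c₀ j) : Fin n)) Finset.univ = S := by
      intro c₀ hc₀inj hc₀adj hc₀0
      constructor
      · rw [hE, Finset.mem_filter]
        refine ⟨Finset.mem_univ _, ?_, ?_, ?_⟩
        · show (φ.symm (c₀ 0) : Fin n) = v
          rw [hc₀0, hi₀, φ.symm_apply_apply]
        · intro x y hxy
          exact hc₀inj (φ.symm.toEquiv.injective (Subtype.coe_injective hxy))
        · intro i j
          have h1 : G.Adj (φ.symm (c₀ i) : Fin n) (φ.symm (c₀ j) : Fin n) ↔
              (G.induce (S : Set (Fin n))).Adj (φ.symm (c₀ i)) (φ.symm (c₀ j)) := by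
            simp only [SimpleGraph.comap_adj, Function.Embedding.coe_subtype]
          rw [h1, φ.symm.map_adj_iff, hc₀adj]
      · ext x
        simp only [Finset.mem_image, Finset.mem_univ, true_and]
        constructor
        · rintro ⟨j, rfl⟩
          exact Finset.mem_coe.mp (φ.symm (c₀ j)).2
        · intro hx
          obtain ⟨j, hj⟩ := (Finite.injective_iff_surjective.mp hc₀inj) (φ ⟨x, Finset.mem_coe.mpr hx⟩)
          exact ⟨j, by rw [hj, φ.symm_apply_apply]⟩
    have k1 := key (fun j => i₀ + j) (fun x y h => by exact add_left_cancel h)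
      (fun i j => cyc_shift_adj k' i₀ i j) (add_zero i₀)
    have k2 := key (fun j => i₀ - j) (fun x y h => by
        have := sub_right_injective h
        simpa using this)
      (fun i j => cyc_shift_adj' k' i₀ i j) (sub_zero i₀)
    refine Finset.one_lt_card.mpr
      ⟨_, Finset.mem_filter.mpr ⟨k1.1, k1.2⟩, _, Finset.mem_filter.mpr ⟨k2.1, k2.2⟩, ?_⟩
    intro hcc
    have h1 := congrFun hcc 1
    have h2 := φ.symm.toEquiv.injective (Subtype.coe_injective h1)
    exact fin_shift_ne k' i₀ h2
  -- 2·|𝒮| ≤ |E|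
  have step2 : 2 * 𝒮.card ≤ E.card := by
    rw [Finset.card_eq_sum_card_fiberwise himg]
    calc 2 * 𝒮.card = ∑ _S ∈ 𝒮, 2 := by rw [Finset.sum_const, smul_eq_mul, mul_comm]
      _ ≤ _ := Finset.sum_le_sum hfib
  -- |E| is bounded by path counts
  have hstep3 : E ⊆ Nv.biUnion (fun a => Nv.biUnion (fun b =>
      (pathFinset G a M ℓ).image (decodeFn n k' v a b))) := by
    intro c hc
    rw [hE, Finset.mem_filter] at hc
    obtain ⟨-, hc0, hinj, hadj⟩ := hc
    have adj_mk : ∀ (p q : ℕ) (hp : p < k'+4) (hq : q < k'+4),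
        G.Adj (c ⟨p,hp⟩) (c ⟨q,hq⟩) ↔
          (q = p+1 ∨ p = q+1 ∨ (p = 0 ∧ q = k'+3) ∨ (q = 0 ∧ p = k'+3)) := by
      intro p q hp hq
      rw [hadj, cyc_adj_iff]
    have hv0 : c ⟨0, by omega⟩ = v := by
      rw [show (⟨0, by omega⟩ : Fin (k'+4)) = 0 from Fin.ext (by simp)]
      exact hc0
    rw [Finset.mem_biUnion]
    refine ⟨c ⟨1, by omega⟩, ?_, ?_⟩
    · rw [hNv, SimpleGraph.mem_neighborFinset, ← hv0]
      exact (adj_mk 0 1 (by omega) (by omega)).mpr (by omega)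
    rw [Finset.mem_biUnion]
    refine ⟨c ⟨k'+3, by omega⟩, ?_, ?_⟩
    · rw [hNv, SimpleGraph.mem_neighborFinset, ← hv0]
      exact (adj_mk 0 (k'+3) (by omega) (by omega)).mpr (by omega)
    rw [Finset.mem_image]
    refine ⟨fun i : Fin ℓ => c ⟨i.val + 2, by have : (i:ℕ) < k'+1 := i.isLt; omega⟩, ?_, ?_⟩
    · rw [pathFinset, Finset.mem_filter]
      refine ⟨Finset.mem_univ _, fun i => ?_, fun i hi => ?_, fun i hi => ?_,
        fun i j hj => ?_, fun i j hij => ?_⟩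
      · rw [hM, Finset.mem_filter]
        have hilt : (i:ℕ) < k'+1 := i.isLt
        refine ⟨Finset.mem_univ _, ?_, ?_⟩
        · rw [← hv0]
          exact fun hA => absurd ((adj_mk 0 ((i:ℕ)+2) (by omega) (by omega)).mp hA) (by omega)
        · intro hEq
          rw [← hv0] at hEq
          have h9 := hinj hEq
          simp only [Fin.mk.injEq] at h9
          omega
      · have hilt : (i:ℕ) < k'+1 := i.isLt
        exact (adj_mk 1 ((i:ℕ)+2) (by omega) (by omega)).mpr (by omega)
      · have hilt : (i:ℕ) < k'+1 := i.isLt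
        exact fun hA => absurd ((adj_mk 1 ((i:ℕ)+2) (by omega) (by omega)).mp hA) (by omega)
      · have hilt : (i:ℕ) < k'+1 := i.isLt
        have hjlt : (j:ℕ) < k'+1 := j.isLt
        exact (adj_mk ((i:ℕ)+2) ((j:ℕ)+2) (by omega) (by omega)).mpr (by omega)
      · have hilt : (i:ℕ) < k'+1 := i.isLt
        have hjlt : (j:ℕ) < k'+1 := j.isLt
        exact fun hA => absurd ((adj_mk ((i:ℕ)+2) ((j:ℕ)+2) (by omega) (by omega)).mp hA) (by omega)
    · funext j
      have hj := j.isLt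
      rw [decodeFn]
      split_ifs with h0 h1 h2
      · rw [← hv0]
        exact congrArg c (Fin.ext (by simp [h0]))
      · exact congrArg c (Fin.ext (by simp [h1]))
      · exact congrArg c (Fin.ext (by simp; omega))
      · exact congrArg c (Fin.ext (by simp; omega))
  have hNvcard : Nv.card = d := by
    rw [hNv, hd]
    exact G.card_neighborFinset_eq_degree v
  have step3 : (E.card : ℝ) ≤ (d:ℝ) * d * ((M.card : ℝ)/(ℓ:ℝ))^ℓ := by
    have h1 : E.card ≤ ∑ a ∈ Nv, ∑ b ∈ Nv, (pathFinset G a M ℓ).card := by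
      refine (Finset.card_le_card hstep3).trans ?_
      refine Finset.card_biUnion_le.trans (Finset.sum_le_sum fun a _ => ?_)
      refine Finset.card_biUnion_le.trans (Finset.sum_le_sum fun b _ => ?_)
      exact Finset.card_image_le
    calc (E.card:ℝ) ≤ ((∑ a ∈ Nv, ∑ b ∈ Nv, (pathFinset G a M ℓ).card : ℕ) : ℝ) := by
          exact_mod_cast h1
      _ = ∑ a ∈ Nv, ∑ b ∈ Nv, ((pathFinset G a M ℓ).card : ℝ) := by push_cast; rfl
      _ ≤ ∑ a ∈ Nv, ∑ b ∈ Nv, ((M.card:ℝ)/(ℓ:ℝ))^ℓ :=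
          Finset.sum_le_sum (fun a _ => Finset.sum_le_sum (fun b _ => pathFinset_card_le G ℓ a M))
      _ = (Nv.card : ℝ) * ((Nv.card : ℝ) * (((M.card:ℝ)/(ℓ:ℝ))^ℓ)) := by
          rw [Finset.sum_const, Finset.sum_const, nsmul_eq_mul, nsmul_eq_mul]
      _ = (d:ℝ) * d * ((M.card:ℝ)/(ℓ:ℝ))^ℓ := by rw [hNvcard]; ring
  -- |M| = n - d - 1
  have hMcard : (M.card : ℝ) = (n:ℝ) - d - 1 := by
    have hneg : Finset.univ.filter (fun x => ¬(¬ G.Adj v x ∧ x ≠ v)) = insert v Nv := by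
      ext x
      simp only [Finset.mem_filter, Finset.mem_univ, true_and, Finset.mem_insert, hNv,
        SimpleGraph.mem_neighborFinset]
      constructor
      · intro h
        by_cases hx : x = v
        · exact Or.inl hx
        · right
          by_contra hA
          exact h ⟨hA, hx⟩
      · rintro (rfl | hA)
        · intro h
          exact h.2 rfl
        · intro h
          exact h.1 hA
    have hsplit : M.card + (insert v Nv).card = n := by
      rw [hM, ← hneg, Finset.card_filter_add_card_filter_not, Finset.card_univ,
        Fintype.card_fin]
    have hins : (insert v Nv).card = d + 1 := by
      rw [Finset.card_insert_of_notMem (by rw [hNv]; exact G.notMem_neighborFinset_self v),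
        hNvcard]
    rw [hins] at hsplit
    have : ((M.card + (d + 1) : ℕ) : ℝ) = (n : ℝ) := by exact_mod_cast hsplit
    push_cast at this
    linarith
  -- final assembly
  rw [hD]
  have hexp : k' + 4 - 3 = ℓ := by simp only [hℓ]; omega
  rw [hexp]
  have hkc : ((k'+4:ℕ):ℝ) - 3 = (ℓ:ℝ) := by rw [hℓ]; push_cast; ring
  rw [hkc, ← hMcard]
  have h2' : (𝒮.card : ℝ) ≤ (E.card:ℝ)/2 := by
    rw [le_div_iff₀ (by norm_num)]
    calc (𝒮.card : ℝ) * 2 = ((2 * 𝒮.card : ℕ) : ℝ) := by push_cast; ring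
      _ ≤ ((E.card : ℕ) : ℝ) := by exact_mod_cast step2
  have hp2 : (d:ℝ)^2 = (d:ℝ)*d := sq (d:ℝ) ▸ rfl
  nlinarith [h2', step3, hp2]
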